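/- Let E be a real inner product space, μ ∈ E, g ∈ E with g ≠ 0, and c, C ∈ ℝ. Suppose a* ∈ E satisfies c + ⟪g, a*⟫ ≤ C and ‖a* − μ‖ ≤ ‖a − μ‖ for every a ∈ E with c + ⟪g, a⟫ ≤ C (i.e., a* is a global minimizer of the single-constraint safety-layer QP). Then there exists λ ≥ 0 such that a* − μ + λ • g = 0 and λ · (c + ⟪g, a*⟫ − C) = 0; moreover necessarily λ = max 0 ((⟪g, μ⟫ + c − C)/‖g‖²) and a* = μ − λ • g. -/

import Mathlib

open scoped RealInnerProductSpace

/-- Necessity of KKT: any global minimizer of the single-constraint safety-layer QP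
admits a Lagrange multiplier satisfying the KKT conditions, and the multiplier and
minimizer are given by the paper's closed-form expressions. -/
theorem safety_layer_kkt_necessary
    {E : Type*} [NormedAddCommGroup E] [InnerProductSpace ℝ E]
    (μ g : E) (hg : g ≠ 0) (c C : ℝ)
    (astar : E)
    (hfeas : c + ⟪g, astar⟫ ≤ C)
    (hmin : ∀ a : E, c + ⟪g, a⟫ ≤ C → ‖astar - μ‖ ≤ ‖a - μ‖) :
    ∃ lam : ℝ, 0 ≤ lam ∧
      astar - μ + lam • g = 0 ∧
      lam * (c + ⟪g, astar⟫ - C) = 0 ∧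
      lam = max 0 ((⟪g, μ⟫ + c - C) / ‖g‖ ^ 2) ∧
      astar = μ - lam • g := by
  have hgn0 : ‖g‖ ≠ 0 := norm_ne_zero_iff.mpr hg
  have hgn : (0:ℝ) < ‖g‖ ^ 2 := by positivity
  set m : ℝ := ⟪g, μ⟫ + c - C with hm
  by_cases hmle : m ≤ 0
  · -- μ itself is feasible, so astar = μ and lam = 0
    have hμfeas : c + ⟪g, μ⟫ ≤ C := by linarith
    have h0 : ‖astar - μ‖ ≤ 0 := by simpa using hmin μ hμfeas
    have hae : astar = μ := by
      have := le_antisymm h0 (norm_nonneg _)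
      have := sub_eq_zero.mp (norm_eq_zero.mp this)
      exact this
    refine ⟨0, le_rfl, ?_, by ring, ?_, by simp [hae]⟩
    · simp [hae]
    · have : (⟪g, μ⟫ + c - C) / ‖g‖ ^ 2 ≤ 0 :=
        div_nonpos_of_nonpos_of_nonneg hmle (le_of_lt hgn)
      simp [max_eq_left this]; exact this
  · push_neg at hmle
    set lam : ℝ := m / ‖g‖ ^ 2 with hlamdef
    have hlampos : 0 < lam := div_pos hmle hgn
    have hlammul : lam * ‖g‖ ^ 2 = m := div_mul_cancel₀ m (ne_of_gt hgn)
    -- feasibility of a₀ = μ - lam • g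
    have hinner_a0 : ⟪g, μ - lam • g⟫ = ⟪g, μ⟫ - lam * ‖g‖ ^ 2 := by
      rw [inner_sub_right, real_inner_smul_right, real_inner_self_eq_norm_sq]
    have ha0feas : c + ⟪g, μ - lam • g⟫ ≤ C := by
      rw [hinner_a0, hlammul]; linarith
    have hnorm_a0 : ‖μ - lam • g - μ‖ = lam * ‖g‖ := by
      rw [sub_sub_cancel_left, norm_neg, norm_smul, Real.norm_eq_abs,
        abs_of_pos hlampos]
    have h2 : ‖μ - astar‖ ≤ lam * ‖g‖ := by
      have := hmin _ ha0feas
      rwa [hnorm_a0, norm_sub_rev] at this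
    have h1 : lam * ‖g‖ ^ 2 ≤ ⟪g, μ - astar⟫ := by
      rw [inner_sub_right, hlammul]; linarith
    -- key: ‖(μ - astar) - lam • g‖ ^ 2 ≤ 0
    have hkey : ‖(μ - astar) - lam • g‖ ^ 2 ≤ 0 := by
      have hexp : ‖(μ - astar) - lam • g‖ ^ 2 =
          ‖μ - astar‖ ^ 2 - 2 * (lam * ⟪g, μ - astar⟫) + lam ^ 2 * ‖g‖ ^ 2 := by
        rw [norm_sub_sq_real, real_inner_smul_right, real_inner_comm, norm_smul,
          Real.norm_eq_abs, abs_of_pos hlampos, mul_pow]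
      rw [hexp]
      have hsq : ‖μ - astar‖ ^ 2 ≤ (lam * ‖g‖) ^ 2 :=
        pow_le_pow_left₀ (norm_nonneg _) h2 2
      nlinarith [mul_le_mul_of_nonneg_left h1 (le_of_lt hlampos)]
    have heq : μ - astar = lam • g := by
      have : ‖(μ - astar) - lam • g‖ = 0 := by
        have h0 := norm_nonneg ((μ - astar) - lam • g)
        nlinarith
      exact sub_eq_zero.mp (norm_eq_zero.mp this)
    have hastar : astar = μ - lam • g := by
      rw [← heq]; abel
    refine ⟨lam, le_of_lt hlampos, ?_, ?_, ?_, hastar⟩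
    · rw [hastar]; abel
    · have : c + ⟪g, astar⟫ = C := by
        rw [hastar, hinner_a0, hlammul]; linarith
      rw [this]; ring
    · exact (max_eq_right (le_of_lt hlampos)).symm
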